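/- Let ω = e^{iπ/5} and let U be any 2×2 unitary. Then |⟨0| U·diag(1,ω^{−1})·U†·diag(1,−ω^{−2})·U·diag(1,−ω^{2})·U†·diag(1,ω)·U |0⟩| = |⟨0| U |0⟩|⁵. -/

import Mathlib

open Matrix Complex

theorem stmt_3 (U : Matrix (Fin 2) (Fin 2) ℂ)
    (hU : U ∈ Matrix.unitaryGroup (Fin 2) ℂ) :
    let ω : ℂ := Complex.exp (Real.pi * Complex.I / 5)
    ‖(U * !![(1 : ℂ), 0; 0, ω⁻¹] * Uᴴ * !![(1 : ℂ), 0; 0, -(ω⁻¹)^2] * U *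
        !![(1 : ℂ), 0; 0, -ω^2] * Uᴴ * !![(1 : ℂ), 0; 0, ω] * U) 0 0‖
      = ‖U 0 0‖^5 := by
  intro ω
  have hwval : ω = Complex.exp (Real.pi * Complex.I / 5) := rfl
  have hw5 : ω ^ 5 = -1 := by
    rw [hwval, ← Complex.exp_nat_mul]
    rw [show ((5 : ℕ) : ℂ) * (Real.pi * Complex.I / 5) = Real.pi * Complex.I by push_cast; ring]
    exact Complex.exp_pi_mul_I
  have hre : ω.re = Real.cos (Real.pi / 5) := by
    rw [hwval, show (Real.pi * Complex.I / 5 : ℂ) = ((Real.pi / 5 : ℝ) : ℂ) * Complex.I by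
      push_cast; ring]
    exact Complex.exp_ofReal_mul_I_re _
  have hcos : 0 < Real.cos (Real.pi / 5) := by
    have hpi := Real.pi_pos
    exact Real.cos_pos_of_mem_Ioo ⟨by linarith, by linarith⟩
  have hwne : ω + 1 ≠ 0 := by
    intro h
    have h2 : ω = -1 := by linear_combination h
    rw [h2] at hre
    simp at hre
    nlinarith [Real.sqrt_nonneg 5]
  have hphi : ω^4 - ω^3 + ω^2 - ω + 1 = 0 := by
    have hmul : (ω + 1) * (ω^4 - ω^3 + ω^2 - ω + 1) = 0 := by linear_combination hw5
    exact (mul_eq_zero.mp hmul).resolve_left hwne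
  have hωne : ω ≠ 0 := by rw [hwval]; exact Complex.exp_ne_zero _
  have hinv : ω⁻¹ = -ω^4 :=
    inv_eq_of_mul_eq_one_right (by linear_combination -hw5)
  have hUU : U * star U = 1 := Matrix.mem_unitaryGroup_iff.mp hU
  have h00 : U 0 0 * (starRingEnd ℂ) (U 0 0) + U 0 1 * (starRingEnd ℂ) (U 0 1) = 1 := by
    have := congrFun (congrFun hUU 0) 0
    simpa [Matrix.mul_apply, Fin.sum_univ_two, Matrix.one_apply] using this
  have h10 : U 1 0 * (starRingEnd ℂ) (U 0 0) + U 1 1 * (starRingEnd ℂ) (U 0 1) = 0 := by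
    have := congrFun (congrFun hUU 1) 0
    simpa [Matrix.mul_apply, Fin.sum_univ_two, Matrix.one_apply] using this
  have he : U.det * (starRingEnd ℂ) U.det = 1 := by
    have h := congrArg Matrix.det hUU
    rw [Matrix.det_mul, Matrix.star_eq_conjTranspose, Matrix.det_conjTranspose,
      Matrix.det_one] at h
    simpa [Complex.star_def, mul_comm] using h
  have hd : U 1 1 = U.det * (starRingEnd ℂ) (U 0 0) := by
    rw [Matrix.det_fin_two]
    linear_combination (-(U 1 1)) * h00 + U 0 1 * h10
  have hc : U 1 0 = -(U.det * (starRingEnd ℂ) (U 0 1)) := by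
    rw [Matrix.det_fin_two]
    linear_combination (-(U 1 0)) * h00 + U 0 0 * h10
  have hD : (starRingEnd ℂ) (U 1 1) = (starRingEnd ℂ) U.det * U 0 0 := by
    have := congrArg (starRingEnd ℂ) hd
    simpa using this
  have hC : (starRingEnd ℂ) (U 1 0) = -((starRingEnd ℂ) U.det * U 0 1) := by
    have := congrArg (starRingEnd ℂ) hc
    simpa using this
  suffices key : ((U * !![(1 : ℂ), 0; 0, ω⁻¹] * Uᴴ * !![(1 : ℂ), 0; 0, -(ω⁻¹)^2] * U *
        !![(1 : ℂ), 0; 0, -ω^2] * Uᴴ * !![(1 : ℂ), 0; 0, ω] * U) 0 0)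
      = (U 0 0)^3 * ((starRingEnd ℂ) (U 0 0))^2 by
    rw [key]
    rw [norm_mul, norm_pow, norm_pow, Complex.norm_conj]
    ring
  rw [hinv]
  simp only [Matrix.mul_apply, Fin.sum_univ_two, Matrix.conjTranspose_apply,
    Matrix.cons_val', Matrix.cons_val_zero, Matrix.cons_val_one, Matrix.head_cons,
    Matrix.head_fin_const, Matrix.empty_val', Matrix.cons_val_fin_one, Matrix.of_apply,
    Complex.star_def]
  linear_combination (U 0 1 * U 1 0 * (starRingEnd ℂ) (U 1 1)^2 + U 0 0 * U 1 0 * (starRingEnd ℂ) (U 1 0) * (starRingEnd ℂ) (U 1 1) * ω - U 0 0 * U 0 1 * (starRingEnd ℂ) (U 0 1) * (starRingEnd ℂ) (U 1 1) * ω^4 + U 0 0^2 * (starRingEnd ℂ) (U 0 1) * (starRingEnd ℂ) (U 1 0)) * hd +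
    (U 0 1 * (starRingEnd ℂ) (U 0 1) * (starRingEnd ℂ) (U 1 0) * (starRingEnd ℂ) (U 1 1) * U.det * ω^8 + U 0 1 * (starRingEnd ℂ) (U 0 0) * (starRingEnd ℂ) (U 1 1)^2 * U.det - U 0 1 * U 1 0 * (starRingEnd ℂ) (U 1 0) * (starRingEnd ℂ) (U 1 1) * ω^8 - U 0 1^2 * (starRingEnd ℂ) (U 0 1) * (starRingEnd ℂ) (U 1 1) * ω^2 - U 0 0 * (starRingEnd ℂ) (U 0 1) * (starRingEnd ℂ) (U 1 0)^2 * U.det * ω^4 + U 0 0 * (starRingEnd ℂ) (U 0 0) * (starRingEnd ℂ) (U 1 0) * (starRingEnd ℂ) (U 1 1) * U.det * ω + U 0 0 * U 1 0 * (starRingEnd ℂ) (U 1 0)^2 * ω^4 + U 0 0 * U 0 1 * (starRingEnd ℂ) (U 0 1) * (starRingEnd ℂ) (U 1 0) - U 0 0 * U 0 1 * (starRingEnd ℂ) (U 0 0) * (starRingEnd ℂ) (U 1 1) * ω^3 + U 0 0 * U 0 1 * (starRingEnd ℂ) (U 0 0) * (starRingEnd ℂ) (U 1 1) * ω^12 +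 U 0 0^2 * (starRingEnd ℂ) (U 0 0) * (starRingEnd ℂ) (U 1 0) * ω - U 0 0^2 * (starRingEnd ℂ) (U 0 0) * (starRingEnd ℂ) (U 1 0) * ω^8) * hc +
    (-U 0 1 * (starRingEnd ℂ) (U 0 1)^2 * (starRingEnd ℂ) (U 1 0) * U.det^2 * ω^8 - U 0 1 * (starRingEnd ℂ) (U 0 0) * (starRingEnd ℂ) (U 0 1) * (starRingEnd ℂ) (U 1 1) * U.det^2 + U 0 1^2 * (starRingEnd ℂ) (U 0 1)^2 * U.det * ω^2 - U 0 0 * (starRingEnd ℂ) (U 0 0) * (starRingEnd ℂ) (U 0 1) * (starRingEnd ℂ) (U 1 0) * U.det^2 * ω + U 0 0 * U 0 1 * (starRingEnd ℂ) (U 0 0) * (starRingEnd ℂ) (U 0 1) * U.det * ω^3 - U 0 0 * U 0 1 * (starRingEnd ℂ) (U 0 0) * (starRingEnd ℂ) (U 0 1) * U.det * ω^4 - U 0 0 * U 0 1 * (starRingEnd ℂ) (U 0 0) * (starRingEnd ℂ) (U 0 1) * U.det * ω^12 - U 0 0 * U 0 1 * (starRingEnd ℂ) (U 0 0) * (starRingEnd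 ℂ) (U 0 1) * U.det^2 * (starRingEnd ℂ) U.det) * hD +
    (U 0 0 * (starRingEnd ℂ) (U 0 1)^2 * (starRingEnd ℂ) (U 1 0) * U.det^2 * ω^4 - U 0 0 * U 0 1 * (starRingEnd ℂ) (U 0 1)^2 * U.det - U 0 0 * U 0 1 * (starRingEnd ℂ) (U 0 1)^2 * U.det^2 * (starRingEnd ℂ) U.det * ω^4 - U 0 0 * U 0 1 * (starRingEnd ℂ) (U 0 1)^2 * U.det^2 * (starRingEnd ℂ) U.det * ω^8 + U 0 0^2 * (starRingEnd ℂ) (U 0 0) * (starRingEnd ℂ) (U 0 1) * U.det - U 0 0^2 * (starRingEnd ℂ) (U 0 0) * (starRingEnd ℂ) (U 0 1) * U.det * ω + U 0 0^2 * (starRingEnd ℂ) (U 0 0) * (starRingEnd ℂ) (U 0 1) * U.det * ω^8 - U 0 0^2 * (starRingEnd ℂ) (U 0 0) * (starRingEnd ℂ) (U 0 1) * U.det^2 * (starRingEnd ℂ) U.det * ω) * hC +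
    (U 0 0 * U 0 1^2 * (starRingEnd ℂ) (U 0 1)^2 + U 0 0 * U 0 1^2 * (starRingEnd ℂ) (U 0 1)^2 * ω^2 + U 0 0 * U 0 1^2 * (starRingEnd ℂ) (U 0 1)^2 * ω^4 + U 0 0 * U 0 1^2 * (starRingEnd ℂ) (U 0 1)^2 * ω^8 + U 0 0 * U 0 1^2 * (starRingEnd ℂ) (U 0 1)^2 * U.det * (starRingEnd ℂ) U.det * ω^4 + U 0 0 * U 0 1^2 * (starRingEnd ℂ) (U 0 1)^2 * U.det * (starRingEnd ℂ) U.det * ω^8 - 2 * U 0 0^2 * U 0 1 * (starRingEnd ℂ) (U 0 0) * (starRingEnd ℂ) (U 0 1) + 2 * U 0 0^2 * U 0 1 * (starRingEnd ℂ) (U 0 0) * (starRingEnd ℂ) (U 0 1) * ω + U 0 0^2 * U 0 1 * (starRingEnd ℂ) (U 0 0) * (starRingEnd ℂ) (U 0 1) * ω^3 - U 0 0^2 * U 0 1 * (starRingEnd ℂ) (U 0 0) * (starRingEnd ℂ) (U 0 1) * ω^4 - U 0 0^2 * U 0 1 * (starRingEnd ℂ) (U 0 0) * (starRingEnd ℂ)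 (U 0 1) * ω^8 - U 0 0^2 * U 0 1 * (starRingEnd ℂ) (U 0 0) * (starRingEnd ℂ) (U 0 1) * ω^12 - U 0 0^2 * U 0 1 * (starRingEnd ℂ) (U 0 0) * (starRingEnd ℂ) (U 0 1) * U.det * (starRingEnd ℂ) U.det + U 0 0^2 * U 0 1 * (starRingEnd ℂ) (U 0 0) * (starRingEnd ℂ) (U 0 1) * U.det * (starRingEnd ℂ) U.det * ω) * he +
    (U 0 0 - U 0 0 * ω + U 0 0 * ω^2 + U 0 0 * ω^4 + U 0 0 * ω^8 + U 0 0 * U 0 1 * (starRingEnd ℂ) (U 0 1) - U 0 0 * U 0 1 * (starRingEnd ℂ) (U 0 1) * ω + U 0 0 * U 0 1 * (starRingEnd ℂ) (U 0 1) * ω^2 + U 0 0 * U 0 1 * (starRingEnd ℂ) (U 0 1) * ω^4 + U 0 0 * U 0 1 * (starRingEnd ℂ) (U 0 1) * ω^8 - 3 * U 0 0^2 * (starRingEnd ℂ) (U 0 0) + 3 * U 0 0^2 * (starRingEnd ℂ) (U 0 0) * ω - 2 * U 0 0^2 * (starRingEnd ℂ) (U 0 0) * ω^2 + U 0 0^2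 * (starRingEnd ℂ) (U 0 0) * ω^3 - 3 * U 0 0^2 * (starRingEnd ℂ) (U 0 0) * ω^4 - 2 * U 0 0^2 * (starRingEnd ℂ) (U 0 0) * ω^8 - U 0 0^2 * (starRingEnd ℂ) (U 0 0) * ω^12) * h00 +
    (U 0 0 + U 0 0 * ω^3 + U 0 0 * ω^4 - 4 * U 0 0^2 * (starRingEnd ℂ) (U 0 0) + U 0 0^2 * (starRingEnd ℂ) (U 0 0) * ω^2 - 2 * U 0 0^2 * (starRingEnd ℂ) (U 0 0) * ω^3 - 3 * U 0 0^2 * (starRingEnd ℂ) (U 0 0) * ω^4 - U 0 0^2 * (starRingEnd ℂ) (U 0 0) * ω^7 - U 0 0^2 * (starRingEnd ℂ) (U 0 0) * ω^8 + 3 * U 0 0^3 * (starRingEnd ℂ) (U 0 0)^2 - U 0 0^3 * (starRingEnd ℂ) (U 0 0)^2 * ω^2 + U 0 0^3 * (starRingEnd ℂ) (U 0 0)^2 * ω^3 + 2 * U 0 0^3 * (starRingEnd ℂ) (U 0 0)^2 * ω^4 + U 0 0^3 * (starRingEnd ℂ) (U 0 0)^2 * ω^7 + U 0 0^3 * (starRingEnd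 ℂ) (U 0 0)^2 * ω^8) * hphi +
    (-(U 0 0 * U 0 1 * (starRingEnd ℂ) (U 0 1) * (starRingEnd ℂ) (U 1 1) * U 1 1 * ω^4 * (ω^5 - 1)) - U 0 0 * U 0 1 * (starRingEnd ℂ) (U 0 1) * (starRingEnd ℂ) (U 1 0) * U 1 0 + U 0 0 * U 0 1^2 * (starRingEnd ℂ) (U 0 1)^2 * ω + U 0 0 * (starRingEnd ℂ) (U 1 0) * (starRingEnd ℂ) (U 1 1) * U 1 0 * U 1 1 * ω * (ω^5 - 1) - U 0 0 * (starRingEnd ℂ) (U 1 0)^2 * U 1 0^2 * ω^4 + U 0 0^2 * (starRingEnd ℂ) (U 0 1) * (starRingEnd ℂ) (U 1 0) * U 1 1 * (ω^5 - 1) + U 0 1 * (starRingEnd ℂ) (U 1 0) * (starRingEnd ℂ) (U 1 1) * U 1 0^2 * ω^8 - U 0 1 * (starRingEnd ℂ) (U 1 1)^2 * U 1 0 * U 1 1 * (ω^10 - ω^5 + 1) + U 0 1^2 * (starRingEnd ℂ) (U 0 1) * (starRingEnd ℂ) (U 1 1) * U 1 0 * ω^2) * hw5
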